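/- (Proposition 1) Assume r and t are compatible (r_i ≤ r_{i''} ⇔ t_i ≤ t_{i''} for all i, i'' ∈ Ī) and e_{i'} ≥ r_i for all i, i' ∈ Ī. Let ī* ∈ Ī minimize e over Ī; let k̄* : {1,…,L} → Ī be an injective map listing L suppliers with nondecreasing regular costs r_{k̄*(1)} ≤ … ≤ r_{k̄*(L)} and such that r_{k̄*(L)} ≤ r_i for every i ∈ Ī outside the range of k̄*; and let S̄* ∈ {0,…,S̄} minimize S ↦ C̄(k̄*, ī*, S) over {0,…,S̄}. Then (k̄*, ī*, S̄*) attains the global minimum of C̄(k, i', S) over all injective k : {1,…,L} → Ī, all i' ∈ Ī, and all S ∈ {0,…,S̄}. -/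

import Mathlib

/-- Truncated-Poisson stock-out probability
`P(λ, S) = (λ^S / S!) / (∑_{s=0}^{S} λ^s / s!)`. -/
noncomputable def stockout (lam : ℝ) (S : ℕ) : ℝ :=
  (lam ^ S / (Nat.factorial S : ℝ)) /
    (∑ s ∈ Finset.range (S + 1), lam ^ s / (Nat.factorial s : ℝ))

/-- Expected operational cost `C̄(k, i', S)` of assigning the injective level map `k`
of regular suppliers, expedited supplier `i'`, and base stock `S`:
`C̄(k,i',S) = h·S + d·∑_{l=1}^{L} (1−q)·q^{l−1}·[ r_{k(l)}·(1 − P(d·t_{k(l)}, S))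
 + e_{i'}·P(d·t_{k(l)}, S) ] + d·e_{i'}·q^L`. -/
noncomputable def Cbar {ι : Type*} [Fintype ι] (r t e : ι → ℝ) (d q h : ℝ) (L : ℕ)
    (k : Fin L → ι) (i' : ι) (S : ℕ) : ℝ :=
  h * S +
    d * ∑ l : Fin L, (1 - q) * q ^ (l : ℕ) *
      (r (k l) * (1 - stockout (d * t (k l)) S) + e i' * stockout (d * t (k l)) S) +
    d * e i' * q ^ L

lemma stockout_denom_pos (lam : ℝ) (hlam : 0 ≤ lam) (S : ℕ) :
    0 < ∑ s ∈ Finset.range (S + 1), lam ^ s / (Nat.factorial s : ℝ) := by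
  have h0 : (0:ℝ) < lam ^ 0 / (Nat.factorial 0 : ℝ) := by norm_num
  have : ∀ s ∈ Finset.range (S + 1), 0 ≤ lam ^ s / (Nat.factorial s : ℝ) := by
    intro s _
    positivity
  calc (0:ℝ) < lam ^ 0 / (Nat.factorial 0 : ℝ) := h0
    _ ≤ _ := Finset.single_le_sum this (by simp)

lemma stockout_nonneg (lam : ℝ) (hlam : 0 ≤ lam) (S : ℕ) : 0 ≤ stockout lam S := by
  unfold stockout
  have := stockout_denom_pos lam hlam S
  positivity

lemma stockout_le_one (lam : ℝ) (hlam : 0 ≤ lam) (S : ℕ) : stockout lam S ≤ 1 := by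
  unfold stockout
  rw [div_le_one (stockout_denom_pos lam hlam S)]
  exact Finset.single_le_sum (f := fun s => lam ^ s / (Nat.factorial s : ℝ))
    (fun s _ => by positivity) (by simp)

lemma stockout_mono (lam mu : ℝ) (hlam : 0 ≤ lam) (h : lam ≤ mu) (S : ℕ) :
    stockout lam S ≤ stockout mu S := by
  have hmu : 0 ≤ mu := hlam.trans h
  unfold stockout
  rw [div_le_div_iff₀ (stockout_denom_pos lam hlam S) (stockout_denom_pos mu hmu S),
    div_mul_eq_mul_div, div_mul_eq_mul_div]
  have hfacS : (0:ℝ) < (Nat.factorial S : ℝ) := by positivity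
  apply div_le_div_of_nonneg_right ?_ hfacS.le |>.trans_eq rfl
  rw [Finset.mul_sum, Finset.mul_sum]
  apply Finset.sum_le_sum
  intro s hs
  simp only [Finset.mem_range] at hs
  have hsS : s ≤ S := by omega
  have hfac : (0:ℝ) < (Nat.factorial s : ℝ) := by positivity
  rw [← mul_div_assoc, ← mul_div_assoc]
  apply div_le_div_of_nonneg_right ?_ hfac.le |>.trans_eq rfl
  have h1 : lam ^ (S - s) ≤ mu ^ (S - s) := pow_le_pow_left₀ hlam h _
  have h2 : lam ^ S = lam ^ (S - s) * lam ^ s := by rw [← pow_add]; congr 1; omega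
  have h3 : mu ^ S = mu ^ (S - s) * mu ^ s := by rw [← pow_add]; congr 1; omega
  rw [h2, h3]
  have hls : (0:ℝ) ≤ lam ^ s := by positivity
  have hms : (0:ℝ) ≤ mu ^ s := by positivity
  have hlr : (0:ℝ) ≤ lam ^ (S - s) := by positivity
  nlinarith [mul_le_mul_of_nonneg_right h1 (mul_nonneg hls hms)]

/-- Proposition 1: the greedy choice (cheapest expedited supplier, the `L` regular
suppliers with smallest regular costs sorted increasingly, and the best base stock
for that assignment) is a global minimizer of `C̄` over all injective level maps,
expedited suppliers, and base stocks in `{0,…,S̄}`. -/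
theorem stmt_11 {ι : Type*} [Fintype ι] [Nonempty ι]
    (r t e : ι → ℝ) (d q h : ℝ) (L Sbar : ℕ)
    (hd : 0 < d) (hq0 : 0 < q) (hq1 : q < 1) (hh : 0 ≤ h) (hL : 1 ≤ L)
    (hcard : L ≤ Fintype.card ι) (ht : ∀ i, 0 < t i)
    (hcompat : ∀ i i'' : ι, r i ≤ r i'' ↔ t i ≤ t i'')
    (he : ∀ i i' : ι, r i ≤ e i')
    (istar : ι) (histar : ∀ i : ι, e istar ≤ e i)
    (kstar : Fin L → ι) (hkinj : Function.Injective kstar)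
    (hkmono : Monotone fun l : Fin L => r (kstar l))
    (hkout : ∀ i : ι, i ∉ Set.range kstar → r (kstar ⟨L - 1, by omega⟩) ≤ r i)
    (Sstar : ℕ) (hSstar : Sstar ≤ Sbar)
    (hSopt : ∀ S : ℕ, S ≤ Sbar →
      Cbar r t e d q h L kstar istar Sstar ≤ Cbar r t e d q h L kstar istar S) :
    ∀ (k : Fin L → ι), Function.Injective k → ∀ i' : ι, ∀ S : ℕ, S ≤ Sbar →
      Cbar r t e d q h L kstar istar Sstar ≤ Cbar r t e d q h L k i' S := by
  classical
  intro k hkinj' i' S hS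
  -- notation
  set P : ι → ℝ := fun i => stockout (d * t i) S with hP
  have hPnn : ∀ i, 0 ≤ P i := fun i =>
    stockout_nonneg _ (le_of_lt (mul_pos hd (ht i))) S
  have hPle1 : ∀ i, P i ≤ 1 := fun i =>
    stockout_le_one _ (le_of_lt (mul_pos hd (ht i))) S
  have hPmono : ∀ i j, r i ≤ r j → P i ≤ P j := by
    intro i j hij
    exact stockout_mono _ _ (le_of_lt (mul_pos hd (ht i)))
      (by have := (hcompat i j).1 hij; nlinarith) S
  -- the per-level cost with the best expedited supplier
  set f : ι → ℝ := fun i => r i * (1 - P i) + e istar * P i with hf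
  have hfmono : ∀ i j, r i ≤ r j → f i ≤ f j := by
    intro i j hij
    have h1 := hPmono i j hij
    have h2 := hPle1 j
    have h3 := he i istar
    simp only [hf]
    nlinarith
  set w : Fin L → ℝ := fun l => (1 - q) * q ^ (l : ℕ) with hw
  have hwpos : ∀ l, 0 < w l := fun l => mul_pos (by linarith) (pow_pos hq0 _)
  have hwanti : Antitone w := by
    intro a b hab
    exact mul_le_mul_of_nonneg_left
      (pow_le_pow_of_le_one (le_of_lt hq0) (le_of_lt hq1) hab) (by linarith)
  -- Step A: Cbar kstar istar Sstar ≤ Cbar kstar istar S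
  refine (hSopt S hS).trans ?_
  -- Step B: Cbar kstar istar S ≤ Cbar k istar S (rearrangement)
  have stepB : Cbar r t e d q h L kstar istar S ≤ Cbar r t e d q h L k istar S := by
    unfold Cbar
    have hsum : ∑ l : Fin L, w l * f (kstar l) ≤ ∑ l : Fin L, w l * f (k l) := by
      -- sort k by r
      obtain ⟨σ, hσ⟩ : ∃ σ : Equiv.Perm (Fin L),
          Monotone fun l => r (k (σ l)) := ⟨Tuple.sort (r ∘ k), Tuple.monotone_sort (r ∘ k)⟩
      have hkey : ∀ l : Fin L, r (kstar l) ≤ r (k (σ l)) := by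
        intro l
        by_contra hcon
        push_neg at hcon
        -- All k(σ j), j ≤ l, lie in kstar '' Iio l
        have hsub : (Finset.Iic l).image (fun j => k (σ j)) ⊆
            (Finset.Iio l).image kstar := by
          intro i hi
          simp only [Finset.mem_image, Finset.mem_Iic, Finset.mem_Iio] at hi ⊢
          obtain ⟨j, hj, rfl⟩ := hi
          have hri : r (k (σ j)) < r (kstar l) := lt_of_le_of_lt (hσ hj) hcon
          have hlast : r (kstar l) ≤ r (kstar ⟨L - 1, by omega⟩) := by
            apply hkmono
            simp only [Fin.le_def]
            omega
          have hmem : k (σ j) ∈ Set.range kstar := by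
            by_contra hnm
            exact absurd (hkout _ hnm) (by linarith)
          obtain ⟨m, hm⟩ := hmem
          refine ⟨m, ?_, hm⟩
          by_contra hml
          push_neg at hml
          have : r (kstar l) ≤ r (kstar m) := hkmono hml
          rw [hm] at this
          linarith
        have hcard1 : ((Finset.Iic l).image (fun j => k (σ j))).card = (l : ℕ) + 1 := by
          rw [Finset.card_image_of_injective _ (fun a b hab => σ.injective (hkinj' hab))]
          simp [Nat.card_Iic]
        have hcard2 : ((Finset.Iio l).image kstar).card ≤ (l : ℕ) := by
          calc ((Finset.Iio l).image kstar).card ≤ (Finset.Iio l).card :=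
                Finset.card_image_le
            _ = (l : ℕ) := by simp [Nat.card_Iio]
        have := Finset.card_le_card hsub
        omega
      -- termwise with sorted version, then rearrangement
      have step1 : ∑ l : Fin L, w l * f (kstar l) ≤ ∑ l : Fin L, w l * f (k (σ l)) := by
        apply Finset.sum_le_sum
        intro l _
        exact mul_le_mul_of_nonneg_left (hfmono _ _ (hkey l)) (le_of_lt (hwpos l))
      have step2 : ∑ l : Fin L, w l * f (k (σ l)) ≤ ∑ l : Fin L, w l * f (k l) := by
        have hgmono : Monotone fun l => f (k (σ l)) := by
          intro a b hab
          exact hfmono _ _ (hσ hab)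
        have hanti : Antivary w (fun l => f (k (σ l))) := by
          intro i j hij
          apply hwanti
          by_contra hji
          push_neg at hji
          exact absurd (hgmono hji.le) (not_le.mpr hij)
        have := hanti.sum_mul_le_sum_mul_comp_perm (σ := σ⁻¹)
        simp only [Equiv.Perm.inv_def, Equiv.apply_symm_apply] at this
        exact this
      exact step1.trans step2
    simp only [hw, hf, hP] at hsum
    have := mul_le_mul_of_nonneg_left hsum (le_of_lt hd)
    linarith
  refine stepB.trans ?_
  -- Step C: Cbar k istar S ≤ Cbar k i' S (cheapest expedited supplier)
  unfold Cbar
  have hsum : ∑ l : Fin L,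
      (1 - q) * q ^ (l : ℕ) * (r (k l) * (1 - stockout (d * t (k l)) S)
        + e istar * stockout (d * t (k l)) S) ≤
      ∑ l : Fin L,
      (1 - q) * q ^ (l : ℕ) * (r (k l) * (1 - stockout (d * t (k l)) S)
        + e i' * stockout (d * t (k l)) S) := by
    apply Finset.sum_le_sum
    intro l _
    have h1 : (0:ℝ) ≤ (1 - q) * q ^ (l : ℕ) := le_of_lt (hwpos l)
    have h2 := hPnn (k l)
    have h3 := histar i'
    simp only [hP] at h2
    apply mul_le_mul_of_nonneg_left _ h1
    nlinarith
  have h4 : d * e istar * q ^ L ≤ d * e i' * q ^ L := by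
    have hqL : (0:ℝ) < q ^ L := pow_pos hq0 _
    exact mul_le_mul_of_nonneg_right
      (mul_le_mul_of_nonneg_left (histar i') hd.le) hqL.le
  have := mul_le_mul_of_nonneg_left hsum (le_of_lt hd)
  linarith
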